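/- Let R be a commutative ring, I an ideal, and φ : N → N' an I-approximation. Then for every R-module B, the induced map φ ⊗ B : N ⊗_R B → N' ⊗_R B is an I-approximation; in particular I·ker(φ ⊗ B) = 0 and I·coker(φ ⊗ B) = 0. -/

import Mathlib

universe u v w

/-- `φ : N → N'` is an *`I`-approximation* (Definition 4.3 of the paper) if it factors as
`β ∘ α` through some module `Z`, with `α` injective, `β` surjective,
`I · coker α = 0` (i.e. `I • Z ⊆ range α`) and `I · ker β = 0`. -/
def IsIApprox {R : Type u} [CommRing R] (I : Ideal R)
    {N : Type v} {N' : Type w} [AddCommGroup N] [AddCommGroup N']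
    [Module R N] [Module R N'] (φ : N →ₗ[R] N') : Prop :=
  ∃ (Z : Type (max v w)) (_ : AddCommGroup Z) (_ : Module R Z)
    (α : N →ₗ[R] Z) (β : Z →ₗ[R] N'),
      Function.Injective α ∧ Function.Surjective β ∧ β ∘ₗ α = φ ∧
      (∀ a ∈ I, ∀ z : Z, a • z ∈ LinearMap.range α) ∧
      (∀ a ∈ I, ∀ z ∈ LinearMap.ker β, a • z = 0)

open TensorProduct

lemma isIApprox_consequences {R : Type u} [CommRing R] (I : Ideal R)
    {M : Type v} {P : Type w} [AddCommGroup M] [AddCommGroup P]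
    [Module R M] [Module R P] (φ : M →ₗ[R] P) (h : IsIApprox I φ) :
    (∀ a ∈ I, ∀ x ∈ LinearMap.ker φ, a • x = 0) ∧
    (∀ a ∈ I, ∀ y : P, a • y ∈ LinearMap.range φ) := by
  obtain ⟨Z, _, _, α, β, hα, hβ, hβα, hcok, hker⟩ := h
  constructor
  · intro a ha x hx
    rw [LinearMap.mem_ker] at hx
    have h1 : β (α x) = 0 := by
      rw [← LinearMap.comp_apply, hβα]; exact hx
    have h2 : a • α x = 0 := hker a ha _ (LinearMap.mem_ker.mpr h1)
    apply hα
    rw [map_smul, h2, map_zero]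
  · intro a ha y
    obtain ⟨z, hz⟩ := hβ y
    obtain ⟨n, hn⟩ := hcok a ha z
    exact ⟨n, by rw [← hβα, LinearMap.comp_apply, hn, map_smul, hz]⟩

lemma isIApprox_tensor_aux {R : Type u} [CommRing R] (I : Ideal R)
    {N : Type v} {N' : Type w} {B : Type u} {F : Type u}
    [AddCommGroup N] [AddCommGroup N'] [AddCommGroup B] [AddCommGroup F]
    [Module R N] [Module R N'] [Module R B] [Module R F] [Module.Flat R F]
    (π : F →ₗ[R] B) (hπ : Function.Surjective π)
    (φ : N →ₗ[R] N') (h : IsIApprox I φ) :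
    IsIApprox I (TensorProduct.map φ (LinearMap.id : B →ₗ[R] B)) := by
  classical
  obtain ⟨Z, _, _, α, β, hα, hβ, hβα, hcok, hker⟩ := h
  -- the "a-inverse" of α
  have hesymm : ∀ w : LinearMap.range α,
      α ((LinearEquiv.ofInjective α hα).symm w) = (w : Z) := by
    rintro ⟨z, n, rfl⟩
    have h1 : (⟨α n, ⟨n, rfl⟩⟩ : LinearMap.range α) = LinearEquiv.ofInjective α hα n :=
      Subtype.ext (LinearEquiv.ofInjective_apply (h := hα) α n).symm
    rw [h1, LinearEquiv.symm_apply_apply, LinearEquiv.ofInjective_apply]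
  set μ : ∀ a ∈ I, Z →ₗ[R] N := fun a ha =>
    (LinearEquiv.ofInjective α hα).symm.toLinearMap ∘ₗ
      (LinearMap.codRestrict (LinearMap.range α) (a • (LinearMap.id : Z →ₗ[R] Z))
        (fun z => hcok a ha (z : Z))) with hμdef
  have hμ : ∀ a (ha : a ∈ I), ∀ z : Z, α (μ a ha z) = a • z := by
    intro a ha z
    simpa [hμdef] using hesymm ⟨a • z, hcok a ha z⟩
  have hμα : ∀ a (ha : a ∈ I), (α ∘ₗ μ a ha) = a • (LinearMap.id : Z →ₗ[R] Z) := by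
    intro a ha; ext z; simp [hμ a ha z]
  have hμker : ∀ a (ha : a ∈ I), (μ a ha) ∘ₗ (LinearMap.ker β).subtype = 0 := by
    intro a ha; ext k
    simp only [LinearMap.comp_apply, Submodule.coe_subtype, LinearMap.zero_apply]
    apply hα
    rw [hμ a ha, map_zero]
    exact hker a ha k k.2
  -- repeated computation : rTensor F α (rTensor F (μ a) u) = a • u
  have hstep : ∀ a (ha : a ∈ I), ∀ u : Z ⊗[R] F,
      LinearMap.rTensor F α (LinearMap.rTensor F (μ a ha) u) = a • u := by
    intro a ha u
    rw [← LinearMap.comp_apply, ← LinearMap.rTensor_comp, hμα a ha,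
      LinearMap.rTensor_smul, LinearMap.smul_apply, LinearMap.rTensor_id, LinearMap.id_apply]
  -- the glue map and its range
  set g : N ⊗[R] F →ₗ[R] (Z ⊗[R] F) × (N ⊗[R] B) :=
    LinearMap.prod (LinearMap.rTensor F α) (-(LinearMap.lTensor N π)) with hgdef
  set W : Submodule R ((Z ⊗[R] F) × (N ⊗[R] B)) := LinearMap.range g with hWdef
  -- β'' is well-defined
  set f : ((Z ⊗[R] F) × (N ⊗[R] B)) →ₗ[R] N' ⊗[R] B :=
    LinearMap.coprod (TensorProduct.map β π)
      (TensorProduct.map φ (LinearMap.id : B →ₗ[R] B)) with hfdef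
  have hfg : ∀ t : N ⊗[R] F, f (g t) = 0 := by
    intro t
    have h1 : (TensorProduct.map β π) ∘ₗ (LinearMap.rTensor F α)
        = TensorProduct.map φ π := by
      rw [LinearMap.rTensor, ← TensorProduct.map_comp, hβα, LinearMap.comp_id]
    have h2 : (TensorProduct.map φ (LinearMap.id : B →ₗ[R] B)) ∘ₗ (LinearMap.lTensor N π)
        = TensorProduct.map φ π := by
      rw [LinearMap.lTensor, ← TensorProduct.map_comp, LinearMap.comp_id, LinearMap.id_comp]
    simp only [hgdef, hfdef, LinearMap.prod_apply, LinearMap.coprod_apply, Function.prod,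
      LinearMap.neg_apply, map_neg]
    rw [← LinearMap.comp_apply, ← LinearMap.comp_apply, h1, h2]
    abel
  have hWf : W ≤ LinearMap.ker f := by
    rintro p ⟨t, rfl⟩
    exact LinearMap.mem_ker.mpr (hfg t)
  refine ⟨((Z ⊗[R] F) × (N ⊗[R] B)) ⧸ W, inferInstance, inferInstance,
    W.mkQ ∘ₗ LinearMap.inr R (Z ⊗[R] F) (N ⊗[R] B),
    W.liftQ f hWf, ?_, ?_, ?_, ?_, ?_⟩
  · -- injectivity of α''
    intro x y hxy
    simp only [LinearMap.comp_apply, LinearMap.inr_apply, Submodule.mkQ_apply,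
      Submodule.Quotient.eq] at hxy
    obtain ⟨t, ht⟩ := hxy
    have ht1 : LinearMap.rTensor F α t = 0 := by
      simpa [hgdef, Prod.ext_iff] using congrArg Prod.fst ht
    have ht0 : t = 0 :=
      Module.Flat.rTensor_preserves_injective_linearMap α hα (by rw [ht1, map_zero])
    have ht2 := congrArg Prod.snd ht
    rw [ht0] at ht2
    simp only [hgdef, map_zero, LinearMap.prod_apply, Pi.prod, Prod.snd_sub] at ht2
    have : (0 : N ⊗[R] B) = x - y := by simpa using ht2
    exact (sub_eq_zero.mp this.symm)
  · -- surjectivity of β''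
    intro y
    obtain ⟨u, hu⟩ := TensorProduct.map_surjective hβ hπ y
    refine ⟨W.mkQ (u, 0), ?_⟩
    rw [Submodule.mkQ_apply, Submodule.liftQ_apply]
    simp [hfdef, hu]
  · -- factorization
    refine TensorProduct.ext' fun n b => ?_
    simp only [LinearMap.comp_apply, LinearMap.inr_apply, Submodule.mkQ_apply,
      Submodule.liftQ_apply, hfdef, LinearMap.coprod_apply, map_zero, zero_add]
  · -- I · coker = 0
    intro a ha ζ
    obtain ⟨⟨u, x⟩, rfl⟩ := W.mkQ_surjective ζ
    set t : N ⊗[R] F := LinearMap.rTensor F (μ a ha) u with htdef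
    have h1 : LinearMap.rTensor F α t = a • u := hstep a ha u
    refine ⟨a • x + LinearMap.lTensor N π t, ?_⟩
    have key : g (-t) = ((0 : Z ⊗[R] F), a • x + LinearMap.lTensor N π t) - a • (u, x) := by
      rw [hgdef]
      simp only [LinearMap.prod_apply, Function.prod, map_neg, LinearMap.neg_apply, neg_neg,
        Prod.smul_mk, Prod.mk_sub_mk, h1, Prod.mk.injEq]
      rw [Prod.neg_mk, Prod.mk.injEq]
      exact ⟨by abel, by abel⟩
    rw [LinearMap.comp_apply, LinearMap.inr_apply, ← map_smul, Submodule.mkQ_apply,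
      Submodule.mkQ_apply, Submodule.Quotient.eq]
    exact ⟨-t, key⟩
  · -- I · ker = 0
    intro a ha ζ hζ
    obtain ⟨⟨u, x⟩, rfl⟩ := W.mkQ_surjective ζ
    rw [LinearMap.mem_ker, Submodule.mkQ_apply, Submodule.liftQ_apply] at hζ
    obtain ⟨t₀, ht₀⟩ := LinearMap.lTensor_surjective N hπ x
    set u' : Z ⊗[R] F := u + LinearMap.rTensor F α t₀ with hu'def
    have hrepr : (W.mkQ (u, x) : _) = W.mkQ (u', 0) := by
      rw [Submodule.mkQ_apply, Submodule.mkQ_apply, Submodule.Quotient.eq]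
      refine ⟨-t₀, ?_⟩
      rw [hgdef]
      simp only [LinearMap.prod_apply, Function.prod, map_neg, LinearMap.neg_apply,
        neg_neg, ht₀, hu'def, Prod.mk_sub_mk, Prod.mk.injEq]
      rw [Prod.neg_mk, Prod.mk.injEq]
      exact ⟨by abel, by abel⟩
    have hfu' : TensorProduct.map β π u' = 0 := by
      have h0 : f (u', 0) = f (u, x) + f (g t₀) := by
        rw [← map_add]
        congr 1
        rw [hgdef]
        simp only [LinearMap.prod_apply, Function.prod, LinearMap.neg_apply, ht₀, hu'def,
          Prod.mk_add_mk, Prod.mk.injEq]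
        exact ⟨trivial, by abel⟩
      have h1 : f (u', 0) = 0 := by rw [h0, hζ, hfg t₀, add_zero]
      simpa [hfdef] using h1
    -- v := lTensor Z π u' lies in ker (rTensor B β)
    have hv : LinearMap.rTensor B β (LinearMap.lTensor Z π u') = 0 := by
      rw [← LinearMap.comp_apply, LinearMap.rTensor_comp_lTensor]
      exact hfu'
    have hexact := rTensor_exact (R := R) B (LinearMap.exact_subtype_ker_map β) hβ
    obtain ⟨wk, hwk⟩ := (hexact _).mp hv
    set t : N ⊗[R] F := LinearMap.rTensor F (μ a ha) u' with htdef
    have hl : LinearMap.lTensor N π t = 0 := by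
      rw [htdef, ← LinearMap.comp_apply, LinearMap.lTensor_comp_rTensor,
        ← LinearMap.rTensor_comp_lTensor, LinearMap.comp_apply, ← hwk,
        ← LinearMap.comp_apply, ← LinearMap.rTensor_comp, hμker a ha, LinearMap.rTensor_zero,
        LinearMap.zero_apply]
    have key2 : g t = a • (u', (0 : N ⊗[R] B)) := by
      rw [hgdef]
      simp only [LinearMap.prod_apply, Function.prod, LinearMap.neg_apply, hl, neg_zero,
        Prod.smul_mk, smul_zero, Prod.mk.injEq]
      exact ⟨hstep a ha u', trivial⟩
    rw [hrepr, ← map_smul, Submodule.mkQ_apply, Submodule.Quotient.mk_eq_zero]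
    exact ⟨t, key2⟩


/-- Lemma 4.9(ii) and Corollary 4.10: if `φ` is an `I`-approximation then so is
`φ ⊗ B` for every module `B`; in particular `I · ker (φ ⊗ B) = 0` and `I · coker (φ ⊗ B) = 0`. -/
theorem stmt6 {R : Type u} [CommRing R] (I : Ideal R)
    {N : Type v} {N' : Type w} {B : Type u} [AddCommGroup N] [AddCommGroup N']
    [AddCommGroup B] [Module R N] [Module R N'] [Module R B] (φ : N →ₗ[R] N')
    (h : IsIApprox I φ) :
    IsIApprox I (TensorProduct.map φ (LinearMap.id : B →ₗ[R] B)) ∧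
    (∀ a ∈ I, ∀ x ∈ LinearMap.ker (TensorProduct.map φ (LinearMap.id : B →ₗ[R] B)),
      a • x = 0) ∧
    (∀ a ∈ I, ∀ y : N' ⊗[R] B, a • y ∈ LinearMap.range
      (TensorProduct.map φ (LinearMap.id : B →ₗ[R] B))) := by
  have main : IsIApprox I (TensorProduct.map φ (LinearMap.id : B →ₗ[R] B)) :=
    isIApprox_tensor_aux I (Finsupp.linearCombination R (_root_.id : B → B))
      (Finsupp.linearCombination_id_surjective R B) φ h
  exact ⟨main, (isIApprox_consequences I _ main).1, (isIApprox_consequences I _ main).2⟩
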